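/- Let I = [x₁, x₂] be a closed interval, y₁ < y₂ reals, f : I × [y₁, y₂] → ℝ continuous with f(x, y₁) = f(x, y₂) = 0 for all x ∈ I, and C : I → [0, ∞) continuous with |f(x, y) − f(x, z)| ≤ C(x)|y − z| for all x ∈ I and y, z ∈ [y₁, y₂]. Then for every x₀ ∈ I and y₀ ∈ [y₁, y₂], there is a unique solution y(x) of y'(x) = f(x, y(x)) with y(x₀) = y₀, this solution is defined on all of I, and y(x) ∈ [y₁, y₂] for all x ∈ I. -/

import Mathlib

open Set Metric Real

lemma uniq_aux {K : NNReal} {g : ℝ → ℝ → ℝ} (hg : ∀ t, LipschitzWith K (g t))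
    {a b c : ℝ} (hc : c ∈ Icc a b) {y z : ℝ → ℝ}
    (hy : ∀ x ∈ Icc a b, HasDerivWithinAt y (g x (y x)) (Icc a b) x)
    (hz : ∀ x ∈ Icc a b, HasDerivWithinAt z (g x (z x)) (Icc a b) x)
    (heq : y c = z c) : ∀ x ∈ Icc a b, y x = z x := by
  have hyc : ContinuousOn y (Icc a b) := fun t ht => (hy t ht).continuousWithinAt
  have hzc : ContinuousOn z (Icc a b) := fun t ht => (hz t ht).continuousWithinAt
  intro x hx
  rcases le_total x c with h | h
  · refine ODE_solution_unique_of_mem_Icc_left (s := fun _ => (univ : Set ℝ))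
      (fun t _ => (hg t).lipschitzOnWith) (hyc.mono (Icc_subset_Icc_right hc.2))
      (fun t ht => (hy t ⟨le_of_lt ht.1, ht.2.trans hc.2⟩).mono_of_mem_nhdsWithin
        (Icc_mem_nhdsLE_of_mem ⟨ht.1, ht.2.trans hc.2⟩))
      (fun _ _ => trivial) (hzc.mono (Icc_subset_Icc_right hc.2))
      (fun t ht => (hz t ⟨le_of_lt ht.1, ht.2.trans hc.2⟩).mono_of_mem_nhdsWithin
        (Icc_mem_nhdsLE_of_mem ⟨ht.1, ht.2.trans hc.2⟩))
      (fun _ _ => trivial) heq ⟨hx.1, h⟩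
  · refine ODE_solution_unique_of_mem_Icc_right (s := fun _ => (univ : Set ℝ))
      (fun t _ => (hg t).lipschitzOnWith) (hyc.mono (Icc_subset_Icc_left hc.1))
      (fun t ht => (hy t ⟨hc.1.trans ht.1, le_of_lt ht.2⟩).mono_of_mem_nhdsWithin
        (Icc_mem_nhdsGE_of_mem ⟨hc.1.trans ht.1, ht.2⟩))
      (fun _ _ => trivial) (hzc.mono (Icc_subset_Icc_left hc.1))
      (fun t ht => (hz t ⟨hc.1.trans ht.1, le_of_lt ht.2⟩).mono_of_mem_nhdsWithin
        (Icc_mem_nhdsGE_of_mem ⟨hc.1.trans ht.1, ht.2⟩))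
      (fun _ _ => trivial) heq ⟨h, hx.2⟩


/-- Existence, uniqueness and invariance of `[y₁, y₂]` for the ODE
`y' = f(x, y)` on a closed interval, when `f` vanishes on the boundary values. -/
theorem stmt_8 (x₁ x₂ y₁ y₂ : ℝ) (hx : x₁ ≤ x₂) (hy : y₁ < y₂)
    (f : ℝ → ℝ → ℝ) (C : ℝ → ℝ)
    (hf : ContinuousOn (fun p : ℝ × ℝ => f p.1 p.2) (Icc x₁ x₂ ×ˢ Icc y₁ y₂))
    (hb1 : ∀ x ∈ Icc x₁ x₂, f x y₁ = 0) (hb2 : ∀ x ∈ Icc x₁ x₂, f x y₂ = 0)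
    (hC : ContinuousOn C (Icc x₁ x₂)) (hC0 : ∀ x ∈ Icc x₁ x₂, 0 ≤ C x)
    (hlip : ∀ x ∈ Icc x₁ x₂, ∀ y ∈ Icc y₁ y₂, ∀ z ∈ Icc y₁ y₂,
      |f x y - f x z| ≤ C x * |y - z|) :
    ∀ x₀ ∈ Icc x₁ x₂, ∀ y₀ ∈ Icc y₁ y₂,
      (∃ y : ℝ → ℝ, y x₀ = y₀ ∧ (∀ x ∈ Icc x₁ x₂, y x ∈ Icc y₁ y₂) ∧
        ∀ x ∈ Icc x₁ x₂, HasDerivWithinAt y (f x (y x)) (Icc x₁ x₂) x) ∧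
      (∀ y z : ℝ → ℝ, y x₀ = y₀ → z x₀ = y₀ →
        (∀ x ∈ Icc x₁ x₂, y x ∈ Icc y₁ y₂) → (∀ x ∈ Icc x₁ x₂, z x ∈ Icc y₁ y₂) →
        (∀ x ∈ Icc x₁ x₂, HasDerivWithinAt y (f x (y x)) (Icc x₁ x₂) x) →
        (∀ x ∈ Icc x₁ x₂, HasDerivWithinAt z (f x (z x)) (Icc x₁ x₂) x) →
        ∀ x ∈ Icc x₁ x₂, y x = z x) := by
  intro x₀ hx₀ y₀ hy₀
  -- clamping maps
  set pI : ℝ → ℝ := fun x => min (max x x₁) x₂ with hpI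
  set pY : ℝ → ℝ := fun y => min (max y y₁) y₂ with hpY
  have hpImem : ∀ x, pI x ∈ Icc x₁ x₂ := fun x =>
    ⟨le_min (le_max_right _ _) hx, min_le_right _ _⟩
  have hpYmem : ∀ y, pY y ∈ Icc y₁ y₂ := fun y =>
    ⟨le_min (le_max_right _ _) hy.le, min_le_right _ _⟩
  have hpIeq : ∀ x ∈ Icc x₁ x₂, pI x = x := fun x hx' => by
    simp only [hpI, max_eq_left hx'.1, min_eq_left hx'.2]
  have hpYeq : ∀ y ∈ Icc y₁ y₂, pY y = y := fun y hy' => by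
    simp only [hpY, max_eq_left hy'.1, min_eq_left hy'.2]
  have hpYlip : ∀ u v : ℝ, |pY u - pY v| ≤ |u - v| := by
    intro u v
    calc |pY u - pY v| ≤ max |max u y₁ - max v y₁| |y₂ - y₂| :=
          abs_min_sub_min_le_max _ _ _ _
      _ ≤ |u - v| := by
          rw [sub_self, abs_zero]
          exact max_le (abs_max_sub_max_le_abs _ _ _) (abs_nonneg _)
  -- extended field
  set g : ℝ → ℝ → ℝ := fun x z => f (pI x) (pY z) with hg
  -- Lipschitz constant
  obtain ⟨K₀, hK₀⟩ := isCompact_Icc.exists_bound_of_continuousOn hC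
  set K : NNReal := ⟨max K₀ 0, le_max_right _ _⟩ with hK
  have hCK : ∀ x ∈ Icc x₁ x₂, C x ≤ (K : ℝ) := fun x hx' =>
    le_max_of_le_left ((le_abs_self _).trans (hK₀ x hx'))
  have hglip : ∀ t, LipschitzWith K (g t) := by
    intro t
    rw [lipschitzWith_iff_dist_le_mul]
    intro u v
    simp only [Real.dist_eq, hg]
    calc |f (pI t) (pY u) - f (pI t) (pY v)| ≤ C (pI t) * |pY u - pY v| :=
          hlip _ (hpImem t) _ (hpYmem u) _ (hpYmem v)
      _ ≤ (K : ℝ) * |u - v| := by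
          apply mul_le_mul (hCK _ (hpImem t)) (hpYlip u v) (abs_nonneg _) K.2
  -- bound on the field
  obtain ⟨M₀, hM₀⟩ := (isCompact_Icc.prod isCompact_Icc).exists_bound_of_continuousOn hf
  set M : ℝ := max M₀ 0 with hM
  have hgM : ∀ t z, ‖g t z‖ ≤ M := fun t z =>
    le_max_of_le_left (hM₀ (pI t, pY z) ⟨hpImem t, hpYmem z⟩)
  -- Picard–Lindelöf data
  have hpl : IsPicardLindelof g (⟨x₀, hx₀⟩ : Icc x₁ x₂) y₀
      ⟨M * (x₂ - x₁), mul_nonneg (le_max_right _ _) (by linarith [hx₀.1, hx₀.2])⟩ 0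
      ⟨M, le_max_right _ _⟩ K := by
    constructor
    · exact fun t _ => (hglip t).lipschitzOnWith
    · intro z _
      have h1 : ContinuousOn ((fun p : ℝ × ℝ => f p.1 p.2) ∘ (fun t : ℝ => (t, pY z)))
          (Icc x₁ x₂) :=
        hf.comp (continuous_id.prodMk continuous_const).continuousOn
          (fun t ht => ⟨ht, hpYmem z⟩)
      have h2 : ContinuousOn (fun t : ℝ => f t (pY z)) (Icc x₁ x₂) := h1
      exact h2.congr fun t ht => by simp only [hg, hpIeq t ht]
    · exact fun t _ z _ => hgM t z
    · simp only [NNReal.coe_mk, NNReal.coe_zero, sub_zero]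
      apply mul_le_mul_of_nonneg_left _ (le_max_right _ _)
      exact max_le (by linarith [hx₀.1]) (by linarith [hx₀.2])
  obtain ⟨y, hy0, hyd⟩ := hpl.exists_eq_forall_mem_Icc_hasDerivWithinAt₀
  replace hy0 : y x₀ = y₀ := hy0
  -- constant solutions
  have hconst1 : ∀ x ∈ Icc x₁ x₂,
      HasDerivWithinAt (fun _ : ℝ => y₁) (g x ((fun _ : ℝ => y₁) x)) (Icc x₁ x₂) x := by
    intro x hx'
    have h0 : g x y₁ = 0 := by
      simp only [hg, hpYeq y₁ ⟨le_refl _, hy.le⟩, hb1 _ (hpImem x)]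
    rw [h0]; exact hasDerivWithinAt_const _ _ _
  have hconst2 : ∀ x ∈ Icc x₁ x₂,
      HasDerivWithinAt (fun _ : ℝ => y₂) (g x ((fun _ : ℝ => y₂) x)) (Icc x₁ x₂) x := by
    intro x hx'
    have h0 : g x y₂ = 0 := by
      simp only [hg, hpYeq y₂ ⟨hy.le, le_refl _⟩, hb2 _ (hpImem x)]
    rw [h0]; exact hasDerivWithinAt_const _ _ _
  -- invariance
  have hycont : ContinuousOn y (Icc x₁ x₂) := fun t ht => (hyd t ht).continuousWithinAt
  have hmem : ∀ x ∈ Icc x₁ x₂, y x ∈ Icc y₁ y₂ := by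
    intro x hx'
    by_contra hmem
    rw [mem_Icc, not_and_or, not_le, not_le] at hmem
    rcases hmem with hlt | hlt
    · -- y x < y₁; find c between x₀ and x with y c = y₁
      have hsub : uIcc x₀ x ⊆ Icc x₁ x₂ := uIcc_subset_Icc hx₀ hx'
      have : y₁ ∈ uIcc (y x₀) (y x) := by
        rw [hy0]; exact ⟨min_le_of_right_le hlt.le, le_max_of_le_left hy₀.1⟩
      obtain ⟨c, hc, hyc⟩ := intermediate_value_uIcc (hycont.mono hsub) this
      have := uniq_aux hglip (hsub hc) hyd (hconst1) hyc x hx'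
      linarith
    · have hsub : uIcc x₀ x ⊆ Icc x₁ x₂ := uIcc_subset_Icc hx₀ hx'
      have : y₂ ∈ uIcc (y x₀) (y x) := by
        rw [hy0]; exact ⟨min_le_of_left_le hy₀.2, le_max_of_le_right hlt.le⟩
      obtain ⟨c, hc, hyc⟩ := intermediate_value_uIcc (hycont.mono hsub) this
      have := uniq_aux hglip (hsub hc) hyd (hconst2) hyc x hx'
      linarith
  -- g agrees with f on solutions staying in range
  have hagree : ∀ (w : ℝ → ℝ), (∀ x ∈ Icc x₁ x₂, w x ∈ Icc y₁ y₂) →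
      ∀ x ∈ Icc x₁ x₂, g x (w x) = f x (w x) := by
    intro w hw x hx'
    simp only [hg, hpIeq x hx', hpYeq (w x) (hw x hx')]
  refine ⟨⟨y, hy0, hmem, fun x hx' => ?_⟩, ?_⟩
  · have := hyd x hx'
    rwa [hagree y hmem x hx'] at this
  · intro u v hu0 hv0 humem hvmem hud hvd
    apply uniq_aux hglip hx₀
    · intro x hx'; rw [hagree u humem x hx']; exact hud x hx'
    · intro x hx'; rw [hagree v hvmem x hx']; exact hvd x hx'
    · rw [hu0, hv0]
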